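/- Let C ⊆ ℝⁿ be a rational polyhedral cone, i.e. C = {x ∈ ℝⁿ : ⟨λᵢ, x⟩ ≥ 0 for i = 1,…,m} for finitely many linear functionals λᵢ with integer coefficients. Then the monoid ℤⁿ ∩ C is finitely generated. -/

import Mathlib

open Finset

section gordan

variable {n m : ℕ} (l : Fin m → Fin n → ℤ)

/-- The slack-variable type. -/
private abbrev GP (n m : ℕ) := (Fin n → ℕ) × (Fin n → ℕ) × (Fin m → ℕ)

/-- Solutions of the homogeneous system with slack variables. -/
private def gSol (p : GP n m) : Prop :=
  ∀ i, (∑ j, l i j * (p.1 j : ℤ)) = (∑ j, l i j * (p.2.1 j : ℤ)) + (p.2.2 i : ℤ)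

private lemma gSol_zero : gSol l (0 : GP n m) := by
  intro i; simp [gSol]

private lemma gSol_add {p q : GP n m} (hp : gSol l p) (hq : gSol l q) : gSol l (p + q) := by
  intro i
  have hp := hp i; have hq := hq i
  simp only [Prod.fst_add, Prod.snd_add, Pi.add_apply, Nat.cast_add, mul_add,
    Finset.sum_add_distrib] at *
  linarith

private lemma gSol_sub {p q : GP n m} (hp : gSol l p) (hq : gSol l q) {c : GP n m}
    (hc : p = q + c) : gSol l c := by
  intro i
  have hp := hp i; have hq := hq i
  subst hc
  simp only [Prod.fst_add, Prod.snd_add, Pi.add_apply, Nat.cast_add, mul_add,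
    Finset.sum_add_distrib] at hp
  push_cast at *
  linarith

/-- The set of minimal nonzero solutions. -/
private def gMin : Set (GP n m) :=
  {p | gSol l p ∧ p ≠ 0 ∧ ∀ q, gSol l q → q ≠ 0 → q ≤ p → q = p}

private lemma gMin_finite : (gMin l (n := n) (m := m)).Finite := by
  have hpwo : (Set.univ : Set (GP n m)).IsPWO := by
    have h1 : (Set.univ : Set (Fin n → ℕ)).IsPWO :=
      Set.isPWO_of_wellQuasiOrderedLE _
    have h2 : (Set.univ : Set (Fin m → ℕ)).IsPWO :=
      Set.isPWO_of_wellQuasiOrderedLE _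
    have := h1.prod (h1.prod h2)
    simpa [Set.univ_prod_univ] using this
  have hanti : IsAntichain (· ≤ ·) (gMin l (n := n) (m := m)) := by
    rintro a ⟨ha, ha0, _⟩ b ⟨hb, hb0, hbmin⟩ hne hle
    exact hne (hbmin a ha ha0 hle)
  exact hanti.finite_of_partiallyWellOrderedOn (hpwo.mono (Set.subset_univ _))

private def gWeight (p : GP n m) : ℕ := (∑ j, p.1 j) + (∑ j, p.2.1 j) + (∑ i, p.2.2 i)

private lemma gWeight_eq_zero {p : GP n m} (h : gWeight p = 0) : p = 0 := by
  simp only [gWeight, Nat.add_eq_zero, Finset.sum_eq_zero_iff, Finset.mem_univ,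
    true_implies] at h
  obtain ⟨⟨h1, h2⟩, h3⟩ := h
  refine Prod.ext (funext h1) (Prod.ext (funext h2) (funext h3))

private lemma le_exists_add {p q : GP n m} (h : q ≤ p) : ∃ c, p = q + c := by
  obtain ⟨c, hc⟩ := exists_add_of_le h
  exact ⟨c, hc⟩

private lemma gSol_mem_closure : ∀ N (p : GP n m), gWeight p ≤ N → gSol l p →
    p ∈ AddSubmonoid.closure (gMin l) := by
  intro N
  induction N with
  | zero =>
    intro p hw hp
    have : p = 0 := gWeight_eq_zero (Nat.le_zero.mp hw)
    rw [this]; exact zero_mem _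
  | succ N ih =>
    intro p hw hp
    by_cases hp0 : p = 0
    · rw [hp0]; exact zero_mem _
    · -- find a minimal nonzero solution below p
      set F : Set (GP n m) := {w | gSol l w ∧ w ≠ 0 ∧ w ≤ p} with hF
      have hFne : F.Nonempty := ⟨p, hp, hp0, le_refl _⟩
      obtain ⟨w, hwF, hwmin⟩ := (wellFounded_lt (α := GP n m)).has_min F hFne
      obtain ⟨hwsol, hw0, hwle⟩ := hwF
      have hwMin : w ∈ gMin l := by
        refine ⟨hwsol, hw0, fun q hq hq0 hqle => ?_⟩
        have hqF : q ∈ F := ⟨hq, hq0, hqle.trans hwle⟩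
        by_contra hne
        exact hwmin q hqF (lt_of_le_of_ne hqle hne)
      obtain ⟨c, hc⟩ := le_exists_add hwle
      have hcsol : gSol l c := gSol_sub l hp hwsol hc
      have hwt : gWeight p = gWeight w + gWeight c := by
        subst hc
        simp [gWeight, Finset.sum_add_distrib]
        ring
      have hwpos : 0 < gWeight w := by
        rcases Nat.eq_zero_or_pos (gWeight w) with h | h
        · exact absurd (gWeight_eq_zero h) hw0
        · exact h
      have hcw : gWeight c ≤ N := by omega
      have hcmem := ih c hcw hcsol
      rw [hc]
      exact add_mem (AddSubmonoid.subset_closure hwMin) hcmem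

/-- The projection homomorphism. -/
private def gProj : GP n m →+ (Fin n → ℤ) where
  toFun p := fun j => (p.1 j : ℤ) - (p.2.1 j : ℤ)
  map_zero' := by funext j; simp
  map_add' p q := by funext j; simp only [Prod.fst_add, Prod.snd_add, Pi.add_apply]; push_cast; ring

end gordan

/-- Gordan's lemma: the lattice points of a rational polyhedral cone in ℝⁿ form a
finitely generated monoid. -/
theorem stmt14 {n m : ℕ} (l : Fin m → Fin n → ℤ) :
    ∃ S : Finset (Fin n → ℤ),
      ((AddSubmonoid.closure (S : Set (Fin n → ℤ))) : Set (Fin n → ℤ)) =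
        {v : Fin n → ℤ | ∀ i : Fin m, 0 ≤ ∑ j, (l i j : ℝ) * (v j : ℝ)} := by
  classical
  -- reduce the real condition to an integer condition
  have hreal : {v : Fin n → ℤ | ∀ i : Fin m, 0 ≤ ∑ j, (l i j : ℝ) * (v j : ℝ)} =
      {v : Fin n → ℤ | ∀ i : Fin m, 0 ≤ ∑ j, l i j * v j} := by
    ext v
    simp only [Set.mem_setOf_eq]
    constructor <;> intro h i <;> have hi := h i
    · have : ((∑ j, l i j * v j : ℤ) : ℝ) = ∑ j, (l i j : ℝ) * (v j : ℝ) := by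
        push_cast; ring
      exact_mod_cast this ▸ hi
    · have : ((∑ j, l i j * v j : ℤ) : ℝ) = ∑ j, (l i j : ℝ) * (v j : ℝ) := by
        push_cast; ring
      rw [← this]
      exact_mod_cast hi
  -- the set of minimal solutions, projected
  have hfin := gMin_finite l (n := n) (m := m)
  refine ⟨((hfin.image (gProj (n := n) (m := m))).toFinset), ?_⟩
  rw [hreal, Set.Finite.coe_toFinset, ← AddMonoidHom.map_mclosure]
  ext v
  simp only [AddSubmonoid.coe_map, Set.mem_image, SetLike.mem_coe, Set.mem_setOf_eq]
  constructor
  · rintro ⟨p, hp, rfl⟩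
    -- closure gMin ⊆ solutions
    have hsol : gSol l p := by
      refine AddSubmonoid.closure_induction (fun q hq => hq.1) (gSol_zero l)
        (fun a b _ _ ha hb => gSol_add l ha hb) hp
    intro i
    have := hsol i
    have : ∑ j, l i j * ((p.1 j : ℤ) - (p.2.1 j : ℤ)) = (p.2.2 i : ℤ) := by
      simp only [mul_sub, Finset.sum_sub_distrib]
      omega
    calc (0 : ℤ) ≤ (p.2.2 i : ℤ) := Int.natCast_nonneg _
    _ = _ := by rw [← this]; rfl
  · intro hv
    refine ⟨(fun j => (v j).toNat, fun j => (-(v j)).toNat, fun i => (∑ j, l i j * v j).toNat),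
      ?_, ?_⟩
    · refine gSol_mem_closure l (gWeight _) _ le_rfl ?_
      intro i
      dsimp only
      have h1 : ∀ j, ((v j).toNat : ℤ) - ((-(v j)).toNat : ℤ) = v j := fun j =>
          Int.toNat_sub_toNat_neg (v j)
      have h2 : ((∑ j, l i j * v j).toNat : ℤ) = ∑ j, l i j * v j :=
          Int.toNat_of_nonneg (hv i)
      have key : ∑ j, l i j * (((v j).toNat : ℤ) - ((-(v j)).toNat : ℤ)) = ∑ j, l i j * v j :=
        Finset.sum_congr rfl fun j _ => by rw [h1 j]
      simp only [mul_sub, Finset.sum_sub_distrib] at key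
      rw [h2]
      linarith
    · funext j
      show ((v j).toNat : ℤ) - ((-(v j)).toNat : ℤ) = v j
      exact Int.toNat_sub_toNat_neg (v j)
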